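/- arXiv:2512.00195 — 3 statements merged into one kernel-verified Lean document; each statement's English description precedes it below -/
import Mathlib

section
/- Let $g : S^1 \to S^1$ be an orientation-preserving circle homeomorphism without fixed points, with lift $\widetilde{g}$ satisfying $\widetilde{y} < \widetilde{g}(\widetilde{y}) < \widetilde{y} + 1$ for all $\widetilde{y} \in \mathbb{R}$. Let $\nu_1$ be a $g$-invariant probability measure on $S^1$ and $\nu_2$ any probability measure on $S^1$ with lift $\widetilde{\nu}_2$. Then $\int_{S^1} \widetilde{\nu}_2([\widetilde{y}, \widetilde{g}(\widetilde{y}))) \, d\nu_1(y) = \rho(\widetilde{g})$, where $\widetilde{y} \in [0,1)$ denotes the standard lift of $y$. -/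
open MeasureTheory Set Filter Topology
open scoped ENNReal

noncomputable section

namespace Stmt7Aux

variable {μ : Measure ℝ} (hshift : ∀ s : Set ℝ, μ ((· + 1) ⁻¹' s) = μ s)
include hshift

theorem shift1 (a b : ℝ) : μ (Ico (a + 1) (b + 1)) = μ (Ico a b) := by
  have h := hshift (Ico (a + 1) (b + 1))
  have hp : (· + 1) ⁻¹' (Ico (a + 1) (b + 1)) = Ico a b := by
    ext x; simp only [mem_preimage, mem_Ico]; constructor <;> intro hx <;>
      exact ⟨by linarith [hx.1], by linarith [hx.2]⟩
  rw [hp] at h; exact h.symm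

theorem shiftZ (n : ℤ) (a b : ℝ) : μ (Ico (a + n) (b + n)) = μ (Ico a b) := by
  induction n using Int.induction_on with
  | zero => simp
  | succ k ih =>
    push_cast
    have := shift1 hshift (a + k) (b + k)
    rw [show a + ((k : ℝ) + 1) = a + k + 1 by ring, show b + ((k : ℝ) + 1) = b + k + 1 by ring,
      this]
    push_cast at ih; exact ih
  | pred k ih =>
    have h := shift1 hshift (a + (-(k : ℝ) - 1)) (b + (-(k : ℝ) - 1))
    rw [show a + (-(k : ℝ) - 1) + 1 = a + -(k : ℝ) by ring,
      show b + (-(k : ℝ) - 1) + 1 = b + -(k : ℝ) by ring] at h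
    rw [show ((-(k : ℤ) - 1 : ℤ) : ℝ) = -(k : ℝ) - 1 by push_cast; ring,
      show ((-(k : ℤ) : ℤ) : ℝ) = -(k : ℝ) by push_cast; ring] at *
    exact h.symm.trans ih

omit hshift in
theorem addIco (u v w : ℝ) (h1 : u ≤ v) (h2 : v ≤ w) :
    μ (Ico u w) = μ (Ico u v) + μ (Ico v w) := by
  rw [← Set.Ico_union_Ico_eq_Ico h1 h2,
    measure_union (Set.Ico_disjoint_Ico_same) measurableSet_Ico]

theorem unitIco (x : ℝ) : μ (Ico x (x + 1)) = μ (Ico (0 : ℝ) 1) := by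
  set n : ℤ := ⌈x⌉ with hn
  have h1 : x ≤ (n : ℝ) := Int.le_ceil x
  have h2 : (n : ℝ) ≤ x + 1 := by have := Int.ceil_lt_add_one x; linarith
  have h3 : (n : ℝ) - 1 ≤ x := by linarith
  have split1 : μ (Ico x (x + 1)) = μ (Ico x (n : ℝ)) + μ (Ico (n : ℝ) (x + 1)) :=
    addIco x (n : ℝ) (x + 1) h1 h2
  have e : μ (Ico (n : ℝ) (x + 1)) = μ (Ico ((n : ℝ) - 1) x) := by
    have := shift1 hshift ((n : ℝ) - 1) x
    rw [show (n : ℝ) - 1 + 1 = (n : ℝ) by ring] at this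
    exact this
  have split2 : μ (Ico ((n : ℝ) - 1) (n : ℝ)) = μ (Ico ((n : ℝ) - 1) x) + μ (Ico x (n : ℝ)) :=
    addIco ((n : ℝ) - 1) x (n : ℝ) h3 h1
  have e2 : μ (Ico ((n : ℝ) - 1) (n : ℝ)) = μ (Ico (0 : ℝ) 1) := by
    have := shiftZ hshift (n - 1) 0 1
    push_cast at this
    rw [show (0 : ℝ) + ((n : ℝ) - 1) = (n : ℝ) - 1 by ring,
      show (1 : ℝ) + ((n : ℝ) - 1) = (n : ℝ) by ring] at this
    exact this
  rw [split1, e, ← e2, split2, add_comm]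

variable (hone : μ (Ico (0 : ℝ) 1) = 1)
include hone

theorem natIco (x : ℝ) (n : ℕ) : μ (Ico x (x + (n : ℝ))) = (n : ℝ≥0∞) := by
  induction n with
  | zero => simp
  | succ k ih =>
    have h1 : x ≤ x + (k : ℝ) := by have : (0:ℝ) ≤ (k:ℝ) := Nat.cast_nonneg k; linarith
    have h2 : x + (k : ℝ) ≤ x + ((k : ℝ) + 1) := by linarith
    push_cast
    rw [show x + ((k : ℝ) + 1) = x + (k : ℝ) + 1 by ring] at h2 ⊢
    rw [addIco x (x + (k : ℝ)) (x + (k : ℝ) + 1) h1 (by linarith), ih,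
      unitIco hshift (x + (k : ℝ)), hone]

theorem Ico_lt_top (a b : ℝ) : μ (Ico a b) ≠ ⊤ := by
  have hb : b ≤ a + (⌈b - a⌉₊ : ℝ) := by
    rcases le_or_gt a b with h | h
    · have := Nat.le_ceil (b - a); linarith
    · have : (0:ℝ) ≤ (⌈b - a⌉₊ : ℝ) := by positivity
      linarith
  have : μ (Ico a b) ≤ μ (Ico a (a + (⌈b - a⌉₊ : ℝ))) :=
    measure_mono (Ico_subset_Ico_right hb)
  rw [natIco hshift hone] at this
  exact ne_top_of_le_ne_top (ENNReal.natCast_ne_top _) this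

theorem toReal_bound (x r : ℝ) (hr : 0 ≤ r) :
    |(μ (Ico x (x + r))).toReal - r| ≤ 1 := by
  set n : ℕ := ⌊r⌋₊ with hn
  have h1 : (n : ℝ) ≤ r := Nat.floor_le hr
  have h2 : r ≤ (n : ℝ) + 1 := (Nat.lt_floor_add_one r).le
  have lo : ((n : ℝ≥0∞)) ≤ μ (Ico x (x + r)) := by
    rw [← natIco hshift hone x n]
    exact measure_mono (Ico_subset_Ico_right (by linarith))
  have hi : μ (Ico x (x + r)) ≤ ((n + 1 : ℕ) : ℝ≥0∞) := by
    rw [← natIco hshift hone x (n + 1)]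
    exact measure_mono (Ico_subset_Ico_right (by push_cast; linarith))
  have hfin : μ (Ico x (x + r)) ≠ ⊤ := Ico_lt_top hshift hone x (x + r)
  have lo' : (n : ℝ) ≤ (μ (Ico x (x + r))).toReal := by
    have := ENNReal.toReal_mono hfin lo
    simpa using this
  have hi' : (μ (Ico x (x + r))).toReal ≤ (n : ℝ) + 1 := by
    have := ENNReal.toReal_mono (ENNReal.natCast_ne_top (n + 1)) hi
    push_cast at this
    simpa [ENNReal.toReal_add] using this
  rw [abs_le]
  constructor <;> linarith

/-- The "distribution function" of μ. -/
def F (μ : Measure ℝ) (y : ℝ) : ℝ := (μ (Ico 0 y)).toReal - (μ (Ico y 0)).toReal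

theorem addIcoReal (u v w : ℝ) (h1 : u ≤ v) (h2 : v ≤ w) :
    (μ (Ico u w)).toReal = (μ (Ico u v)).toReal + (μ (Ico v w)).toReal := by
  rw [addIco u v w h1 h2,
    ENNReal.toReal_add (Ico_lt_top hshift hone u v) (Ico_lt_top hshift hone v w)]

theorem F_diff (a b : ℝ) (h : a ≤ b) : F μ b - F μ a = (μ (Ico a b)).toReal := by
  unfold F
  rcases le_or_gt 0 a with ha | ha
  · have hb : (0:ℝ) ≤ b := le_trans ha h
    rw [Set.Ico_eq_empty (a := a) (not_lt.mpr ha), Set.Ico_eq_empty (a := b) (not_lt.mpr hb),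
      addIcoReal hshift hone 0 a b ha h]
    simp
  · rcases le_or_gt 0 b with hb | hb
    · rw [Set.Ico_eq_empty (b := a) (not_lt.mpr ha.le), Set.Ico_eq_empty (a := b) (not_lt.mpr hb),
        addIcoReal hshift hone a 0 b ha.le hb]
      simp only [measure_empty, ENNReal.toReal_zero]; ring
    · rw [Set.Ico_eq_empty (b := a) (not_lt.mpr ha.le), Set.Ico_eq_empty (b := b) (not_lt.mpr hb.le),
        addIcoReal hshift hone a b 0 h hb.le]
      simp only [measure_empty, ENNReal.toReal_zero]; ring

theorem F_mono : Monotone (F μ) := by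
  intro a b hab
  have := F_diff hshift hone a b hab
  have h0 : (0:ℝ) ≤ (μ (Ico a b)).toReal := ENNReal.toReal_nonneg
  linarith

theorem F_measurable : Measurable (F μ) := (F_mono hshift hone).measurable

end Stmt7Aux

/-- `νL` is the infinite-mass lift of the measure `ν` on the circle:
translation-by-1 invariant, and its restriction to `[0,1)` projects to `ν`. -/
def IsLift (ν : Measure UnitAddCircle) (νL : Measure ℝ) : Prop :=
  (∀ s : Set ℝ, νL ((· + 1) ⁻¹' s) = νL s) ∧
    Measure.map (fun x : ℝ => (x : UnitAddCircle)) (νL.restrict (Ico (0:ℝ) 1)) = ν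
theorem stmt7 (g : UnitAddCircle → UnitAddCircle) (gL : ℝ → ℝ)
    (hmono : StrictMono gL) (hcont : Continuous gL)
    (hper : ∀ y : ℝ, gL (y + 1) = gL y + 1)
    (hcomm : ∀ y : ℝ, ((gL y : ℝ) : UnitAddCircle) = g (y : UnitAddCircle))
    (hnofix : ∀ y : ℝ, y < gL y ∧ gL y < y + 1)
    (ν₁ ν₂ : Measure UnitAddCircle) [IsProbabilityMeasure ν₁] [IsProbabilityMeasure ν₂]
    (hinv : Measure.map g ν₁ = ν₁)
    (ν₁L ν₂L : Measure ℝ) (hlift₁ : IsLift ν₁ ν₁L) (hlift₂ : IsLift ν₂ ν₂L)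
    (ρ : ℝ) (hρ : ∀ x : ℝ, Tendsto (fun n => (gL^[n] x - x) / n) atTop (𝓝 ρ)) :
    ∫ y in Ico (0:ℝ) 1, (ν₂L (Ico y (gL y))).toReal ∂ν₁L = ρ := by
  obtain ⟨hsh₂, hmap₂⟩ := hlift₂
  obtain ⟨hsh₁, hmap₁⟩ := hlift₁
  set π : ℝ → UnitAddCircle := fun x : ℝ => (x : UnitAddCircle) with hπdef
  have hπ : Measurable π := AddCircle.measurable_mk'
  -- total masses
  have mass : ∀ (ν : Measure UnitAddCircle) (νL : Measure ℝ), IsProbabilityMeasure ν →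
      Measure.map π (νL.restrict (Ico (0:ℝ) 1)) = ν → νL (Ico (0:ℝ) 1) = 1 := by
    intro ν νL hp hm
    have h1 : ν univ = 1 := measure_univ
    rw [← hm, Measure.map_apply hπ MeasurableSet.univ, preimage_univ,
      Measure.restrict_apply_univ] at h1
    exact h1
  have hone₂ : ν₂L (Ico (0:ℝ) 1) = 1 := mass ν₂ ν₂L inferInstance hmap₂
  have hone₁ : ν₁L (Ico (0:ℝ) 1) = 1 := mass ν₁ ν₁L inferInstance hmap₁
  haveI : IsProbabilityMeasure (ν₁L.restrict (Ico (0:ℝ) 1)) :=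
    ⟨by rw [Measure.restrict_apply_univ]; exact hone₁⟩
  -- the integrand
  set G : ℝ → ℝ := fun y => (ν₂L (Ico y (gL y))).toReal with hGdef
  have hGF : ∀ y, G y = Stmt7Aux.F ν₂L (gL y) - Stmt7Aux.F ν₂L y := fun y =>
    (Stmt7Aux.F_diff hsh₂ hone₂ y (gL y) (hnofix y).1.le).symm
  have hGmeas : Measurable G := by
    have := Stmt7Aux.F_measurable hsh₂ hone₂
    have : Measurable fun y => Stmt7Aux.F ν₂L (gL y) - Stmt7Aux.F ν₂L y :=
      (this.comp hcont.measurable).sub this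
    exact (funext hGF : G = _) ▸ this
  have hGnonneg : ∀ y, 0 ≤ G y := fun y => ENNReal.toReal_nonneg
  have hGle : ∀ y, G y ≤ 1 := by
    intro y
    have h1 : ν₂L (Ico y (gL y)) ≤ ν₂L (Ico y (y + 1)) :=
      measure_mono (Ico_subset_Ico_right (hnofix y).2.le)
    have h2 : ν₂L (Ico y (y + 1)) = 1 := by rw [Stmt7Aux.unitIco hsh₂ y, hone₂]
    have := ENNReal.toReal_mono (by rw [h2]; exact ENNReal.one_ne_top) h1
    rwa [h2, ENNReal.toReal_one] at this
  -- periodicity over ℤ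
  have hperZ : ∀ (n : ℤ) (y : ℝ), gL (y + n) = gL y + n := by
    intro n
    induction n using Int.induction_on with
    | zero => simp
    | succ k ih =>
      intro y
      push_cast
      rw [show y + ((k:ℝ) + 1) = (y + (k:ℝ)) + 1 by ring, hper]
      have h2 := ih y
      push_cast at h2
      rw [h2]
      ring
    | pred k ih =>
      intro y
      push_cast
      have h := hper (y + (-(k:ℝ) - 1))
      rw [show y + (-(k:ℝ) - 1) + 1 = y + -(k:ℝ) by ring] at h
      have h2 := ih y
      push_cast at h2
      have h3 : gL (y + (-(k:ℝ) - 1)) = gL y + (-(k:ℝ) - 1) := by linarith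
      convert h3 using 2 <;> ring
  have hGper : ∀ (n : ℤ) (y : ℝ), G (y + n) = G y := by
    intro n y
    show (ν₂L (Ico (y + n) (gL (y + n)))).toReal = _
    rw [hperZ n y]
    rw [Stmt7Aux.shiftZ hsh₂ n y (gL y)]
  -- iterates
  have hiter1 : ∀ (n : ℕ) (y : ℝ), gL^[n] (y + 1) = gL^[n] y + 1 := by
    intro n
    induction n with
    | zero => simp
    | succ k ih =>
      intro y
      rw [Function.iterate_succ_apply', Function.iterate_succ_apply', ih, hper]
  have hitermono : ∀ n : ℕ, Monotone (gL^[n]) := fun n => (hmono.iterate n).monotone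
  have hxle : ∀ (n : ℕ) (y : ℝ), y ≤ gL^[n] y := by
    intro n
    induction n with
    | zero => simp
    | succ k ih =>
      intro y
      rw [Function.iterate_succ_apply']
      exact le_trans (ih y) (hnofix _).1.le
  -- telescoping
  have htel : ∀ (n : ℕ) (x : ℝ),
      ∑ k ∈ Finset.range n, G (gL^[k] x) = (ν₂L (Ico x (gL^[n] x))).toReal := by
    intro n x
    have : ∀ k, G (gL^[k] x) =
        Stmt7Aux.F ν₂L (gL^[k+1] x) - Stmt7Aux.F ν₂L (gL^[k] x) := by
      intro k
      rw [hGF, Function.iterate_succ_apply']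
    rw [Finset.sum_congr rfl (fun k _ => this k), Finset.sum_range_sub
      (f := fun k => Stmt7Aux.F ν₂L (gL^[k] x)), Function.iterate_zero_apply]
    exact Stmt7Aux.F_diff hsh₂ hone₂ x (gL^[n] x) (hxle n x)
  -- the descended function on the circle
  set H : UnitAddCircle → ℝ := fun z => G ((AddCircle.equivIco 1 0 z : ℝ)) with hHdef
  have hHπ : ∀ y : ℝ, H (π y) = G y := by
    intro y
    have h1 : ((AddCircle.equivIco 1 0 (π y) : ℝ)) = Int.fract y := by
      rw [hπdef]
      simp [AddCircle.coe_equivIco_mk_apply]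
    rw [hHdef]
    simp only [h1]
    have : Int.fract y = y + ((-⌊y⌋ : ℤ) : ℝ) := by rw [Int.fract]; push_cast; ring
    rw [this, hGper]
  have hHmeas : Measurable H := by
    have h1 : Measurable fun z : UnitAddCircle => ((AddCircle.equivIco 1 0 z : ℝ)) := by
      have := (AddCircle.measurableEquivIco (T := (1:ℝ)) 0).measurable
      exact measurable_subtype_coe.comp this
    exact hGmeas.comp h1
  have hHnonneg : ∀ z, 0 ≤ H z := fun z => hGnonneg _
  have hHle : ∀ z, H z ≤ 1 := fun z => hGle _
  -- g is measurable
  have hgcont : Continuous g := by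
    rw [(QuotientAddGroup.isQuotientMap_mk (AddSubgroup.zmultiples (1:ℝ))).continuous_iff]
    have : (g ∘ QuotientAddGroup.mk) = fun y : ℝ => ((gL y : ℝ) : UnitAddCircle) := by
      funext y; exact (hcomm y).symm
    rw [this]
    exact Continuous.comp (AddCircle.continuous_mk' (1:ℝ)) hcont
  have hgmeas : Measurable g := hgcont.measurable
  have hgiter : ∀ k : ℕ, Measurable (g^[k]) := by
    intro k
    induction k with
    | zero => simpa using measurable_id
    | succ m ih => rw [Function.iterate_succ]; exact ih.comp hgmeas
  -- commutation of iterates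
  have hcommiter : ∀ (k : ℕ) (y : ℝ), π (gL^[k] y) = g^[k] (π y) := by
    intro k
    induction k with
    | zero => simp
    | succ m ih =>
      intro y
      rw [Function.iterate_succ_apply', Function.iterate_succ_apply', ← ih]
      exact hcomm _
  -- transfer of integrals from the circle to [0,1)
  have key : ∀ f : UnitAddCircle → ℝ, AEStronglyMeasurable f ν₁ →
      ∫ z, f z ∂ν₁ = ∫ y in Ico (0:ℝ) 1, f (π y) ∂ν₁L := by
    intro f hf
    rw [← hmap₁]
    exact integral_map hπ.aemeasurable (by rw [hmap₁]; exact hf)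
  -- invariance of integrals of iterates
  have hint : ∀ k : ℕ, Integrable (fun z => H (g^[k] z)) ν₁ := by
    intro k
    refine ⟨((hHmeas.comp (hgiter k))).aestronglyMeasurable, ?_⟩
    apply HasFiniteIntegral.of_bounded (C := 1)
    filter_upwards with z
    rw [Real.norm_eq_abs, abs_le]
    exact ⟨by linarith [hHnonneg (g^[k] z)], hHle _⟩
  have hinvk : ∀ k : ℕ, ∫ z, H (g^[k] z) ∂ν₁ = ∫ z, H z ∂ν₁ := by
    intro k
    induction k with
    | zero => simp
    | succ m ih =>
      have h1 : ∀ z, H (g^[m+1] z) = H (g^[m] (g z)) := by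
        intro z; rw [Function.iterate_succ_apply]
      simp only [h1]
      have h2 : ∫ z, H (g^[m] (g z)) ∂ν₁ = ∫ z, H (g^[m] z) ∂(Measure.map g ν₁) :=
        (integral_map hgmeas.aemeasurable
          (by rw [hinv]; exact (hHmeas.comp (hgiter m)).aestronglyMeasurable)).symm
      rw [h2, hinv, ih]
  -- main identity
  have hmain : ∀ n : ℕ, (n : ℝ) * ∫ z, H z ∂ν₁ =
      ∫ y in Ico (0:ℝ) 1, (ν₂L (Ico y (gL^[n] y))).toReal ∂ν₁L := by
    intro n
    have h1 : (n : ℝ) * ∫ z, H z ∂ν₁ = ∑ k ∈ Finset.range n, ∫ z, H (g^[k] z) ∂ν₁ := by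
      rw [Finset.sum_congr rfl (fun k _ => hinvk k)]
      simp [mul_comm]
    have h2 : ∑ k ∈ Finset.range n, ∫ z, H (g^[k] z) ∂ν₁
        = ∫ z, ∑ k ∈ Finset.range n, H (g^[k] z) ∂ν₁ :=
      (integral_finset_sum _ (fun k _ => hint k)).symm
    have h3 : ∫ z, ∑ k ∈ Finset.range n, H (g^[k] z) ∂ν₁
        = ∫ y in Ico (0:ℝ) 1, ∑ k ∈ Finset.range n, H (g^[k] (π y)) ∂ν₁L := by
      apply key
      apply (Finset.measurable_sum _ (fun k _ => hHmeas.comp (hgiter k))).aestronglyMeasurable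
    have h4 : (fun y : ℝ => ∑ k ∈ Finset.range n, H (g^[k] (π y)))
        = fun y => (ν₂L (Ico y (gL^[n] y))).toReal := by
      funext y
      rw [← htel n y]
      exact Finset.sum_congr rfl (fun k _ => by rw [← hcommiter k y, hHπ])
    rw [h1, h2, h3, h4]
  -- bound
  have hbound : ∀ n : ℕ, |(n : ℝ) * (∫ z, H z ∂ν₁) - gL^[n] 0| ≤ 2 := by
    intro n
    rw [hmain n]
    have hptw : ∀ y ∈ Ico (0:ℝ) 1,
        ‖(ν₂L (Ico y (gL^[n] y))).toReal - gL^[n] 0‖ ≤ 2 := by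
      intro y hy
      obtain ⟨hy0, hy1⟩ := hy
      have hr : (0:ℝ) ≤ gL^[n] y - y := by linarith [hxle n y]
      have b1 : |(ν₂L (Ico y (y + (gL^[n] y - y)))).toReal - (gL^[n] y - y)| ≤ 1 :=
        Stmt7Aux.toReal_bound hsh₂ hone₂ y (gL^[n] y - y) hr
      rw [show y + (gL^[n] y - y) = gL^[n] y by ring] at b1
      have l1 : gL^[n] 0 ≤ gL^[n] y := hitermono n hy0
      have l2 : gL^[n] y ≤ gL^[n] 0 + 1 := by
        have := hitermono n (le_of_lt hy1)
        rw [show (1:ℝ) = 0 + 1 by ring, hiter1 n 0] at this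
        linarith
      rw [Real.norm_eq_abs, abs_le]
      rw [abs_le] at b1
      constructor <;> [linarith [b1.1]; linarith [b1.2]]
    have hgLiter : ∀ k : ℕ, Measurable (gL^[k]) := by
      intro k
      induction k with
      | zero => simpa using measurable_id
      | succ m ih => rw [Function.iterate_succ]; exact ih.comp hcont.measurable
    have hmeasn : Measurable fun y : ℝ => (ν₂L (Ico y (gL^[n] y))).toReal := by
      have hm : Measurable fun y : ℝ => ∑ k ∈ Finset.range n, G (gL^[k] y) :=
        Finset.measurable_sum _ (fun k _ => hGmeas.comp (hgLiter k))
      exact (funext (htel n) : _ = _) ▸ hm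
    have hInt : Integrable (fun y : ℝ => (ν₂L (Ico y (gL^[n] y))).toReal)
        (ν₁L.restrict (Ico (0:ℝ) 1)) := by
      refine ⟨hmeasn.aestronglyMeasurable, ?_⟩
      apply HasFiniteIntegral.of_bounded (C := (n : ℝ))
      filter_upwards with y
      rw [Real.norm_eq_abs, ← htel n y, abs_le]
      constructor
      · have : (0:ℝ) ≤ ∑ k ∈ Finset.range n, G (gL^[k] y) :=
          Finset.sum_nonneg (fun k _ => hGnonneg _)
        linarith [Nat.cast_nonneg (α := ℝ) n]
      · calc ∑ k ∈ Finset.range n, G (gL^[k] y)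
            ≤ ∑ k ∈ Finset.range n, 1 := Finset.sum_le_sum (fun k _ => hGle _)
          _ = (n : ℝ) := by simp
    calc |∫ y in Ico (0:ℝ) 1, (ν₂L (Ico y (gL^[n] y))).toReal ∂ν₁L - gL^[n] 0|
        = ‖∫ y in Ico (0:ℝ) 1, ((ν₂L (Ico y (gL^[n] y))).toReal - gL^[n] 0) ∂ν₁L‖ := by
          rw [integral_sub hInt (integrable_const _), integral_const]
          simp [Real.norm_eq_abs]
      _ ≤ 2 * ((ν₁L.restrict (Ico (0:ℝ) 1)) univ).toReal := by
          apply norm_integral_le_of_norm_le_const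
          rw [ae_restrict_iff' measurableSet_Ico]
          filter_upwards with y hy using hptw y hy
      _ = 2 := by rw [Measure.restrict_apply_univ, hone₁]; simp
  -- conclusion: the integral of H is ρ
  have hlim : Tendsto (fun n : ℕ => gL^[n] 0 / n) atTop (𝓝 (∫ z, H z ∂ν₁)) := by
    rw [tendsto_iff_dist_tendsto_zero]
    have h2n : Tendsto (fun n : ℕ => (2:ℝ) / n) atTop (𝓝 0) :=
      tendsto_const_div_atTop_nhds_zero_nat 2
    apply squeeze_zero' (Eventually.of_forall fun n => dist_nonneg) ?_ h2n
    filter_upwards [eventually_ge_atTop 1] with n hn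
    have hb := hbound n
    have hn' : (0:ℝ) < n := by exact_mod_cast hn
    rw [Real.dist_eq]
    have e : gL^[n] 0 / n - ∫ z, H z ∂ν₁ = -(((n:ℝ) * ∫ z, H z ∂ν₁) - gL^[n] 0) / n := by
      field_simp
      ring
    rw [e, abs_div, abs_neg, abs_of_pos hn']
    gcongr
  have hHρ : ∫ z, H z ∂ν₁ = ρ := by
    have h0 := hρ 0
    simp only [sub_zero] at h0
    exact tendsto_nhds_unique hlim h0
  have hfinal := key H hHmeas.aestronglyMeasurable
  simp only [hHπ] at hfinal
  rw [← hfinal, hHρ]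
end
end

section
/- Let $g : S^1 \to S^1$ be an orientation-preserving homeomorphism with lift $\widetilde{g}$ satisfying $x < \widetilde{g}(x) < x + 1$ for all $x$, let $\nu$ be a probability measure on $S^1$ with lift $\widetilde{\nu}$, and let $m'$ be a probability measure on $\mathbb{R}$ supported on $[0,1]$. Then for every $n \ge 1$, $\big| \Phi_{\nu}(m', (\widetilde{g}^n)_* m') - (\widetilde{g}^n(0) - 0) \big| \le 2$, where $\Phi_{\nu}(m_1, m_2) = \int (m_1((-\infty,y]) - m_2((-\infty,y])) \, d\widetilde{\nu}(y)$. -/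
open MeasureTheory Set Filter Topology

noncomputable section

/-- Signed shift of `m₂` relative to `m₁`, measured with the lifted measure `νL`. -/
def PhiM (νL : Measure ℝ) (m₁ m₂ : Measure ℝ) : ℝ :=
  ∫ y, ((m₁ (Iic y)).toReal - (m₂ (Iic y)).toReal) ∂νL
theorem stmt11 (ν : Measure UnitAddCircle) [IsProbabilityMeasure ν]
    (νL : Measure ℝ) (h : IsLift ν νL)
    (gL : ℝ → ℝ) (hmono : StrictMono gL) (hcont : Continuous gL)
    (hper : ∀ y : ℝ, gL (y + 1) = gL y + 1)
    (hnofix : ∀ x : ℝ, x < gL x ∧ gL x < x + 1)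
    (m' : Measure ℝ) [IsProbabilityMeasure m'] (hsupp : m' (Icc (0:ℝ) 1)ᶜ = 0) :
    ∀ n : ℕ, 1 ≤ n →
      |PhiM νL m' (m'.map (gL^[n])) - (gL^[n] 0 - 0)| ≤ 2 := by
  obtain ⟨hinv, hproj⟩ := h
  have hcoe : Measurable (fun x : ℝ => (x : UnitAddCircle)) := AddCircle.measurable_mk'
  have h01 : νL (Ico (0:ℝ) 1) = 1 := by
    have := congrArg (fun μ : Measure UnitAddCircle => μ Set.univ) hproj
    simpa [Measure.map_apply hcoe MeasurableSet.univ] using this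
  have hunit : ∀ k : ℕ, νL (Ico (k:ℝ) (k+1)) = 1 := by
    intro k
    induction k with
    | zero => simpa using h01
    | succ k ih =>
      have hpre : ((· + 1) ⁻¹' Ico ((k:ℝ)+1) ((k:ℝ)+1+1)) = Ico (k:ℝ) (k+1) := by
        ext x
        simp only [Set.mem_preimage, Set.mem_Ico]
        constructor <;> rintro ⟨h1, h2⟩ <;> constructor <;> linarith
      have h2 := hinv (Ico ((k:ℝ)+1) ((k:ℝ)+1+1))
      rw [hpre] at h2
      push_cast
      rw [← h2, ih]
  have hIco : ∀ s N : ℕ, νL (Ico (s:ℝ) (s+N)) = N := by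
    intro s N
    induction N with
    | zero => simp
    | succ N ih =>
      have hNn : (0:ℝ) ≤ (N:ℝ) := Nat.cast_nonneg N
      have hu : Ico (s:ℝ) ((s:ℝ)+N) ∪ Ico ((s:ℝ)+N) ((s:ℝ)+N+1) = Ico (s:ℝ) ((s:ℝ)+N+1) :=
        Set.Ico_union_Ico_eq_Ico (by linarith) (by linarith)
      have hd : Disjoint (Ico (s:ℝ) ((s:ℝ)+N)) (Ico ((s:ℝ)+N) ((s:ℝ)+N+1)) :=
        Set.Ico_disjoint_Ico_same
      have hlast : νL (Ico ((s:ℝ)+N) ((s:ℝ)+N+1)) = 1 := by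
        have h3 := hunit (s + N)
        push_cast at h3
        exact h3
      have key : νL (Ico (s:ℝ) ((s:ℝ)+N+1)) = (N:ENNReal) + 1 := by
        rw [← hu, measure_union hd measurableSet_Ico, ih, hlast]
      push_cast
      rw [show (s:ℝ) + ((N:ℝ)+1) = (s:ℝ)+(N:ℝ)+1 by ring]
      exact key
  -- now the main argument
  intro n hn
  set G := gL^[n] with hGdef
  have hGmono : StrictMono G := hmono.iterate n
  have hmeas_iter : ∀ m : ℕ, Measurable (gL^[m]) := by
    intro m
    induction m with
    | zero => simpa using measurable_id
    | succ k ih =>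
      rw [Function.iterate_succ']
      exact hcont.measurable.comp ih
  have hper_iter : ∀ (m : ℕ) (y : ℝ), gL^[m] (y + 1) = gL^[m] y + 1 := by
    intro m y
    induction m with
    | zero => simp
    | succ k ih =>
      rw [Function.iterate_succ_apply', Function.iterate_succ_apply', ih, hper]
  have hGmeas : Measurable G := hmeas_iter n
  have hGper : ∀ y : ℝ, G (y + 1) = G y + 1 := hper_iter n
  have hGle : ∀ (m : ℕ) (x : ℝ), x ≤ gL^[m] x := by
    intro m x
    induction m with
    | zero => simp
    | succ k ih =>
      rw [Function.iterate_succ_apply']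
      exact ih.trans (le_of_lt (hnofix _).1)
  have hGgt : ∀ x : ℝ, x < G x := by
    intro x
    obtain ⟨m, rfl⟩ : ∃ m, n = m + 1 := ⟨n - 1, by omega⟩
    rw [hGdef, Function.iterate_succ_apply]
    exact lt_of_lt_of_le (hnofix x).1 (hGle m (gL x))
  set a := G 0 with hadef
  have ha0 : 0 < a := hGgt 0
  have hG1 : G 1 = a + 1 := by
    have := hGper 0
    simpa using this
  set m'n := m'.map G with hm'n
  have hmn : ∀ y : ℝ, m'n (Iic y) = m' (G ⁻¹' Iic y) := fun y =>
    Measure.map_apply hGmeas measurableSet_Iic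
  set F : ℝ → ℝ := fun y => (m' (Iic y)).toReal - (m'n (Iic y)).toReal with hFdef
  have hPhi : PhiM νL m' m'n = ∫ y, F y ∂νL := rfl
  -- basic CDF facts
  have hm1_lt : ∀ y : ℝ, y < 0 → m' (Iic y) = 0 := by
    intro y hy
    refine measure_mono_null (fun x hx => ?_) hsupp
    simp only [Set.mem_Iic] at hx
    simp only [Set.mem_compl_iff, Set.mem_Icc, not_and_or, not_le]
    left; linarith
  have hm1_ge : ∀ y : ℝ, 1 ≤ y → m' (Iic y) = 1 := by
    intro y hy
    rw [← prob_compl_eq_zero_iff measurableSet_Iic]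
    refine measure_mono_null (fun x hx => ?_) hsupp
    simp only [Set.mem_compl_iff, Set.mem_Iic, not_le] at hx
    simp only [Set.mem_compl_iff, Set.mem_Icc, not_and_or, not_le]
    right; linarith
  have hm2_lt : ∀ y : ℝ, y < a → m'n (Iic y) = 0 := by
    intro y hy
    rw [hmn]
    refine measure_mono_null (fun x hx => ?_) hsupp
    simp only [Set.mem_preimage, Set.mem_Iic] at hx
    have : G x < G 0 := lt_of_le_of_lt hx hy
    have hx0 : x < 0 := hGmono.lt_iff_lt.mp this
    simp only [Set.mem_compl_iff, Set.mem_Icc, not_and_or, not_le]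
    left; linarith
  have hm2_ge : ∀ y : ℝ, a + 1 ≤ y → m'n (Iic y) = 1 := by
    intro y hy
    rw [hmn, ← prob_compl_eq_zero_iff (hGmeas measurableSet_Iic)]
    refine measure_mono_null (fun x hx => ?_) hsupp
    simp only [Set.mem_compl_iff, Set.mem_preimage, Set.mem_Iic, not_le] at hx
    simp only [Set.mem_compl_iff, Set.mem_Icc, not_and_or, not_le]
    by_contra hcon
    push_neg at hcon
    obtain ⟨h1, h2⟩ := hcon
    have : G x ≤ G 1 := hGmono.monotone h2
    rw [hG1] at this
    linarith
  have hm2_le : ∀ y : ℝ, m'n (Iic y) ≤ m' (Iic y) := by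
    intro y
    rw [hmn]
    refine measure_mono (fun x hx => ?_)
    simp only [Set.mem_preimage, Set.mem_Iic] at hx ⊢
    exact le_of_lt (lt_of_lt_of_le (hGgt x) hx)
  -- facts about F
  have hF0 : ∀ y : ℝ, 0 ≤ F y := by
    intro y
    have := ENNReal.toReal_mono (measure_ne_top m' _) (hm2_le y)
    simp only [hFdef]
    linarith
  have hF1 : ∀ y : ℝ, F y ≤ 1 := by
    intro y
    have h1 : (m' (Iic y)).toReal ≤ 1 := by
      have := prob_le_one (μ := m') (s := Iic y)
      simpa using ENNReal.toReal_mono (by norm_num) this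
    have h2 : 0 ≤ (m'n (Iic y)).toReal := ENNReal.toReal_nonneg
    simp only [hFdef]
    linarith
  have hFzero_lt : ∀ y : ℝ, y < 0 → F y = 0 := by
    intro y hy
    simp only [hFdef, hm1_lt y hy, hm2_lt y (hy.trans ha0)]
    simp
  have hFzero_ge : ∀ y : ℝ, a + 1 ≤ y → F y = 0 := by
    intro y hy
    have hy1 : 1 ≤ y := by linarith
    simp only [hFdef, hm1_ge y hy1, hm2_ge y hy]
    simp
  have hFone : ∀ y : ℝ, 1 ≤ y → y < a → F y = 1 := by
    intro y h1 h2
    simp only [hFdef, hm1_ge y h1, hm2_lt y h2]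
    simp
  -- measurability of F
  have hFmeas : Measurable F := by
    have m1 : Measurable fun y : ℝ => (m' (Iic y)).toReal := by
      apply Monotone.measurable
      intro x y hxy
      exact ENNReal.toReal_mono (measure_ne_top m' _) (measure_mono (Iic_subset_Iic.mpr hxy))
    have m2 : Measurable fun y : ℝ => (m'n (Iic y)).toReal := by
      apply Monotone.measurable
      intro x y hxy
      refine ENNReal.toReal_mono ?_ (measure_mono (Iic_subset_Iic.mpr hxy))
      rw [hmn]; exact (measure_mono (Set.subset_univ _)).trans_lt (by simp) |>.ne
    exact m1.sub m2
  -- upper bound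
  set N : ℕ := ⌈a⌉₊ + 1 with hNdef
  have haN : a + 1 ≤ (N:ℝ) := by
    have := Nat.le_ceil a
    rw [hNdef]
    push_cast
    linarith
  have hNa : (N:ℝ) ≤ a + 2 := by
    have := Nat.ceil_lt_add_one (le_of_lt ha0)
    rw [hNdef]
    push_cast
    linarith
  have hvolN : νL (Ico (0:ℝ) N) = N := by
    have := hIco 0 N
    simpa using this
  set gup : ℝ → ℝ := (Ico (0:ℝ) N).indicator (fun _ => (1:ℝ)) with hgup
  have hgup_int : Integrable gup νL := by
    refine IntegrableOn.integrable_indicator ?_ measurableSet_Ico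
    rw [integrableOn_const_iff]
    right
    rw [hvolN]
    exact ENNReal.natCast_lt_top N
  have hF_le_gup : ∀ y : ℝ, F y ≤ gup y := by
    intro y
    by_cases hy : y ∈ Ico (0:ℝ) N
    · simp only [hgup, Set.indicator_of_mem hy]
      exact hF1 y
    · simp only [hgup, Set.indicator_of_notMem hy]
      simp only [Set.mem_Ico, not_and_or, not_le, not_lt] at hy
      rcases hy with hy | hy
      · exact le_of_eq (hFzero_lt y hy)
      · exact le_of_eq (hFzero_ge y (haN.trans hy))
  have hFint : Integrable F νL := by
    refine hgup_int.mono' hFmeas.aestronglyMeasurable (ae_of_all _ fun y => ?_)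
    rw [Real.norm_eq_abs, abs_of_nonneg (hF0 y)]
    exact hF_le_gup y
  have hup : ∫ y, F y ∂νL ≤ a + 2 := by
    have h1 : ∫ y, F y ∂νL ≤ ∫ y, gup y ∂νL := integral_mono hFint hgup_int hF_le_gup
    have h2 : ∫ y, gup y ∂νL = (N:ℝ) := by
      rw [hgup, integral_indicator_const (1:ℝ) measurableSet_Ico, measureReal_def, hvolN]
      simp
    linarith
  -- lower bound
  have hlow : a - 2 ≤ ∫ y, F y ∂νL := by
    rcases le_or_gt a 1 with hcase | hcase
    · have : 0 ≤ ∫ y, F y ∂νL := integral_nonneg hF0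
      linarith
    · set M : ℕ := ⌊a - 1⌋₊ with hMdef
      have hMa : (M:ℝ) ≤ a - 1 := Nat.floor_le (by linarith)
      have haM : a - 2 ≤ (M:ℝ) := by
        have := Nat.lt_floor_add_one (a - 1)
        linarith
      have hvolM : νL (Ico (1:ℝ) (1 + M)) = M := by
        have := hIco 1 M
        simpa using this
      set glo : ℝ → ℝ := (Ico (1:ℝ) (1+M)).indicator (fun _ => (1:ℝ)) with hglo
      have hglo_int : Integrable glo νL := by
        refine IntegrableOn.integrable_indicator ?_ measurableSet_Ico
        rw [integrableOn_const_iff]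
        right
        rw [hvolM]
        exact ENNReal.natCast_lt_top M
      have hglo_le : ∀ y : ℝ, glo y ≤ F y := by
        intro y
        by_cases hy : y ∈ Ico (1:ℝ) (1+M)
        · rw [Set.mem_Ico] at hy
          obtain ⟨h1, h2⟩ := hy
          simp only [hglo, Set.indicator_of_mem (Set.mem_Ico.mpr ⟨h1, h2⟩)]
          exact le_of_eq (hFone y h1 (by linarith)).symm
        · simp only [hglo, Set.indicator_of_notMem hy]
          exact hF0 y
      have h1 : ∫ y, glo y ∂νL ≤ ∫ y, F y ∂νL := integral_mono hglo_int hFint hglo_le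
      have h2 : ∫ y, glo y ∂νL = (M:ℝ) := by
        rw [hglo, integral_indicator_const (1:ℝ) measurableSet_Ico, measureReal_def, hvolM]
        simp
      linarith
  rw [hPhi]
  rw [abs_le]
  constructor <;> simp only [sub_zero] <;> [linarith; linarith]
end
end

section
/- Let $\widetilde{g}$ be a lift of an orientation-preserving circle homeomorphism and suppose the limit $\rho = \lim_{n\to\infty} (\widetilde{g}^n(0))/n$ exists. Let $\nu$ be a $g$-invariant probability measure on $S^1$ with lift $\widetilde{\nu}$, and suppose $\widetilde{g}(x) > x$ for all $x$. Then $\widetilde{\nu}([x, \widetilde{g}(x))) = \rho$ for every $x \in \mathbb{R}$. -/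
open MeasureTheory Set Filter Topology

set_option linter.unusedSectionVars false
noncomputable section

private lemma coe_eq_iff' {x y : ℝ} :
    (x : UnitAddCircle) = (y : UnitAddCircle) ↔ ∃ n : ℤ, x = y + n := by
  rw [QuotientAddGroup.eq_iff_sub_mem, AddSubgroup.mem_zmultiples_iff]
  constructor
  · rintro ⟨k, hk⟩
    refine ⟨k, ?_⟩
    have : (k : ℝ) = x - y := by simpa [zsmul_eq_mul] using hk
    linarith
  · rintro ⟨n, hn⟩
    exact ⟨n, by simp [zsmul_eq_mul, hn]⟩

private lemma coe_int_add (x : ℝ) (n : ℤ) : ((x + n : ℝ) : UnitAddCircle) = x :=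
  coe_eq_iff'.mpr ⟨n, rfl⟩

private lemma img_meas (a b : ℝ) :
    MeasurableSet ((fun x : ℝ => (x : UnitAddCircle)) '' Ico a b) := by
  rcases le_or_gt b a with h | h
  · simp [Ico_eq_empty_of_le h]
  · rw [show Ico a b = insert a (Ioo a b) from (Set.Ioo_insert_left h).symm,
      Set.image_insert_eq]
    refine MeasurableSet.insert ?_ _
    exact ((QuotientAddGroup.isOpenMap_coe) _ isOpen_Ioo).measurableSet

section Main

variable (g : UnitAddCircle → UnitAddCircle) (gL : ℝ → ℝ)
    (hmono : StrictMono gL)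
    (hper : ∀ y : ℝ, gL (y + 1) = gL y + 1)
    (hcomm : ∀ y : ℝ, ((gL y : ℝ) : UnitAddCircle) = g (y : UnitAddCircle))
    (ν : Measure UnitAddCircle) [IsProbabilityMeasure ν]
    (hinv : Measure.map g ν = ν)
    (νL : Measure ℝ) (hlift : IsLift ν νL)

-- integer translation invariance of νL
private lemma transZ (hlift : IsLift ν νL) :
    ∀ (n : ℤ) (s : Set ℝ), νL ((· + (n : ℝ)) ⁻¹' s) = νL s := by
  intro n
  induction n using Int.induction_on with
  | zero => intro s; simp
  | succ k ih =>
    intro s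
    have h : (· + (((k : ℤ) + 1 : ℤ) : ℝ)) ⁻¹' s = (· + ((k : ℤ) : ℝ)) ⁻¹' ((· + 1) ⁻¹' s) := by
      ext x
      simp only [Set.mem_preimage]
      have : x + (((k : ℤ) + 1 : ℤ) : ℝ) = x + ((k : ℤ) : ℝ) + 1 := by push_cast; ring
      rw [this]
    rw [h, ih, hlift.1]
  | pred k ih =>
    intro s
    have h : (· + 1) ⁻¹' ((· + ((-(k : ℤ) - 1 : ℤ) : ℝ)) ⁻¹' s)
        = (· + ((-(k : ℤ) : ℤ) : ℝ)) ⁻¹' s := by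
      ext x
      simp only [Set.mem_preimage]
      have : x + 1 + ((-(k : ℤ) - 1 : ℤ) : ℝ) = x + ((-(k : ℤ) : ℤ) : ℝ) := by push_cast; ring
      rw [this]
    have h2 := hlift.1 ((· + ((-(k : ℤ) - 1 : ℤ) : ℝ)) ⁻¹' s)
    rw [h, ih] at h2
    exact h2.symm


-- π-fiber measures
private lemma proj_apply (hlift : IsLift ν νL) (a : ℝ) (S : Set UnitAddCircle)
    (hS : MeasurableSet S) :
    νL ((fun x : ℝ => (x : UnitAddCircle)) ⁻¹' S ∩ Ico a (a + 1)) = ν S := by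
  set π : ℝ → UnitAddCircle := fun x : ℝ => (x : UnitAddCircle) with hπ
  have hπm : Measurable π := AddCircle.measurable_mk'
  have hA : MeasurableSet (π ⁻¹' S) := hπm hS
  -- base case at 0
  have base : νL (π ⁻¹' S ∩ Ico 0 1) = ν S := by
    conv_rhs => rw [← hlift.2]
    rw [Measure.map_apply hπm hS, Measure.restrict_apply hA]
  -- shift invariance of the fiber set
  have hshift : ∀ n : ℤ, (· + (n : ℝ)) ⁻¹' (π ⁻¹' S) = π ⁻¹' S := by
    intro n
    ext x
    simp only [Set.mem_preimage, hπ]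
    rw [coe_int_add]
  set k : ℤ := ⌊a⌋ with hk
  set m : ℝ := (k : ℝ) + 1 with hm
  have ham : a ≤ m := by have := Int.lt_floor_add_one a; linarith [this.le]
  have hma : m ≤ a + 1 := by have := Int.floor_le a; linarith
  have split1 : νL (π ⁻¹' S ∩ Ico a (a + 1))
      = νL (π ⁻¹' S ∩ Ico a m) + νL (π ⁻¹' S ∩ Ico m (a + 1)) := by
    rw [← measure_union ?_ (hA.inter measurableSet_Ico), ← Set.inter_union_distrib_left,
      Set.Ico_union_Ico_eq_Ico ham hma]
    exact (Set.disjoint_of_subset inter_subset_right inter_subset_right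
      (Set.Ico_disjoint_Ico_same))
  have tr1 : νL (π ⁻¹' S ∩ Ico m (a + 1)) = νL (π ⁻¹' S ∩ Ico (m - 1) a) := by
    have := hlift.1 (π ⁻¹' S ∩ Ico m (a + 1))
    rw [← this]
    congr 1
    rw [Set.preimage_inter]
    have h1 : (· + (1:ℝ)) ⁻¹' (π ⁻¹' S) = π ⁻¹' S := by
      have := hshift 1; simpa using this
    rw [h1, Set.preimage_add_const_Ico]
    congr 1
    ring_nf
  have split2 : νL (π ⁻¹' S ∩ Ico (m - 1) a) + νL (π ⁻¹' S ∩ Ico a m)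
      = νL (π ⁻¹' S ∩ Ico (m - 1) m) := by
    rw [← measure_union ?_ (hA.inter measurableSet_Ico), ← Set.inter_union_distrib_left,
      Set.Ico_union_Ico_eq_Ico (by linarith : m - 1 ≤ a) ham]
    exact (Set.disjoint_of_subset inter_subset_right inter_subset_right
      (Set.Ico_disjoint_Ico_same))
  have tr2 : νL (π ⁻¹' S ∩ Ico (m - 1) m) = ν S := by
    have := transZ ν νL hlift k (π ⁻¹' S ∩ Ico (m - 1) m)
    rw [← this, Set.preimage_inter, hshift k, Set.preimage_add_const_Ico]
    have : Ico (m - 1 - (k : ℝ)) (m - (k : ℝ)) = Ico (0:ℝ) 1 := by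
      rw [hm]; norm_num
    rw [this, base]
  rw [split1, tr1, add_comm, split2, tr2]


private lemma unit_mass (hlift : IsLift ν νL) (a : ℝ) : νL (Ico a (a + 1)) = 1 := by
  have h := proj_apply ν νL hlift a univ MeasurableSet.univ
  simpa [measure_univ] using h

private lemma split_mass (a c b : ℝ) (h1 : a ≤ c) (h2 : c ≤ b) :
    νL (Ico a b) = νL (Ico a c) + νL (Ico c b) := by
  rw [← Set.Ico_union_Ico_eq_Ico h1 h2, measure_union Set.Ico_disjoint_Ico_same measurableSet_Ico]

private lemma nat_mass (hlift : IsLift ν νL) (a : ℝ) (n : ℕ) :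
    νL (Ico a (a + n)) = n := by
  induction n with
  | zero => simp
  | succ n ih =>
    have h1 : a ≤ a + (n : ℝ) := le_add_of_nonneg_right (Nat.cast_nonneg n)
    have : νL (Ico a (a + ((n + 1 : ℕ) : ℝ))) = νL (Ico a (a + (n:ℝ))) + νL (Ico (a + (n:ℝ)) (a + (n:ℝ) + 1)) := by
      have := split_mass νL a (a + (n:ℝ)) (a + ((n + 1 : ℕ) : ℝ)) h1 (by push_cast; linarith)
      rw [this]
      congr 1
      push_cast
      ring_nf
    rw [this, ih, unit_mass ν νL hlift]
    push_cast
    rfl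

private lemma fin_mass (hlift : IsLift ν νL) (a b : ℝ) : νL (Ico a b) ≠ ⊤ := by
  obtain ⟨n, hn⟩ := exists_nat_ge (b - a)
  have : νL (Ico a b) ≤ νL (Ico a (a + n)) := measure_mono (Set.Ico_subset_Ico_right (by linarith))
  rw [nat_mass ν νL hlift] at this
  exact ne_top_of_le_ne_top (by simp) this


private lemma gL_int (hper : ∀ y : ℝ, gL (y + 1) = gL y + 1) :
    ∀ (t : ℝ) (n : ℤ), gL (t + n) = gL t + n := by
  intro t n
  induction n using Int.induction_on with
  | zero => simp
  | succ k ih =>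
    have : t + ((k : ℤ) + 1 : ℤ) = (t + (k : ℤ)) + 1 := by push_cast; ring
    rw [this, hper, ih]
    push_cast; ring
  | pred k ih =>
    have h : (t + (-(k : ℤ) - 1 : ℤ)) + 1 = t + (-(k : ℤ) : ℤ) := by push_cast; ring
    have := hper (t + (-(k : ℤ) - 1 : ℤ))
    rw [h, ih] at this
    push_cast at this ⊢
    linarith

private lemma interval_eq (hlift : IsLift ν νL) (a b : ℝ) (hab : a ≤ b) (hb : b ≤ a + 1) :
    νL (Ico a b) = ν ((fun x : ℝ => (x : UnitAddCircle)) '' Ico a b) := by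
  set π : ℝ → UnitAddCircle := fun x : ℝ => (x : UnitAddCircle) with hπ
  have key : π ⁻¹' (π '' Ico a b) ∩ Ico a (a + 1) = Ico a b := by
    apply Set.Subset.antisymm
    · rintro x ⟨⟨y, hy, hxy⟩, hx⟩
      obtain ⟨n, hn⟩ := coe_eq_iff'.mp (hxy.symm : π x = π y)
      have h1 : a ≤ y := hy.1
      have h2 : y < b := hy.2
      have h3 : a ≤ x := hx.1
      have h4 : x < a + 1 := hx.2
      have : n = 0 := by
        rcases lt_trichotomy n 0 with h | h | h
        · exfalso
          have : (n : ℝ) ≤ -1 := by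
            have : n ≤ -1 := by omega
            exact_mod_cast this
          linarith
        · exact h
        · exfalso
          have : (1:ℝ) ≤ (n : ℝ) := by exact_mod_cast h
          linarith
      rw [this] at hn
      simp at hn
      rw [hn]; exact hy
    · intro x hx
      exact ⟨Set.mem_image_of_mem π hx, hx.1, lt_of_lt_of_le hx.2 hb⟩
  have h := proj_apply ν νL hlift a (π '' Ico a b) (img_meas a b)
  rw [key] at h
  exact h.symm.symm


private lemma g_meas (hcont : Continuous gL)
    (hcomm : ∀ y : ℝ, ((gL y : ℝ) : UnitAddCircle) = g (y : UnitAddCircle)) :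
    Measurable g := by
  have hc : Continuous g := by
    rw [(QuotientAddGroup.isQuotientMap_mk (AddSubgroup.zmultiples (1:ℝ))).continuous_iff]
    have : g ∘ (QuotientAddGroup.mk : ℝ → UnitAddCircle)
        = fun y : ℝ => ((gL y : ℝ) : UnitAddCircle) := by
      funext y
      exact (hcomm y).symm
    rw [this]
    exact continuous_quotient_mk'.comp hcont
  exact hc.measurable

private lemma g_preimage (hmono : StrictMono gL)
    (hper : ∀ y : ℝ, gL (y + 1) = gL y + 1)
    (hcomm : ∀ y : ℝ, ((gL y : ℝ) : UnitAddCircle) = g (y : UnitAddCircle))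
    (a b : ℝ) :
    g ⁻¹' ((fun x : ℝ => (x : UnitAddCircle)) '' Ico (gL a) (gL b))
      = (fun x : ℝ => (x : UnitAddCircle)) '' Ico a b := by
  ext z
  simp only [Set.mem_preimage, Set.mem_image]
  constructor
  · rintro ⟨y, hy, hyz⟩
    obtain ⟨t, rfl⟩ := QuotientAddGroup.mk_surjective z
    rw [← hcomm t] at hyz
    obtain ⟨n, hn⟩ := coe_eq_iff'.mp hyz
    have hgL : gL (t + (n : ℤ)) = y := by
      rw [gL_int gL hper t n]
      linarith
    have hta : a ≤ t + ((n : ℤ) : ℝ) := by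
      by_contra hcon
      push_neg at hcon
      have := hmono hcon
      rw [hgL] at this
      exact absurd hy.1 (not_le.mpr this)
    have htb : t + ((n : ℤ) : ℝ) < b := by
      by_contra hcon
      push_neg at hcon
      have : gL b ≤ gL (t + ((n : ℤ) : ℝ)) := hmono.monotone hcon
      rw [hgL] at this
      exact absurd hy.2 (not_lt.mpr this)
    refine ⟨t + ((n : ℤ) : ℝ), ⟨hta, htb⟩, ?_⟩
    exact coe_int_add t n
  · rintro ⟨t, ht, rfl⟩
    refine ⟨gL t, ⟨(hmono.le_iff_le).mpr ht.1, hmono ht.2⟩, ?_⟩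
    exact hcomm t


private lemma inv_small (hmono : StrictMono gL) (hcont : Continuous gL)
    (hper : ∀ y : ℝ, gL (y + 1) = gL y + 1)
    (hcomm : ∀ y : ℝ, ((gL y : ℝ) : UnitAddCircle) = g (y : UnitAddCircle))
    (hinv : Measure.map g ν = ν) (hlift : IsLift ν νL)
    (a b : ℝ) (hab : a ≤ b) (hb : b ≤ a + 1) :
    νL (Ico (gL a) (gL b)) = νL (Ico a b) := by
  have h1 : gL a ≤ gL b := hmono.monotone hab
  have h2 : gL b ≤ gL a + 1 := by
    have := hmono.monotone hb
    rw [hper] at this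
    linarith
  rw [interval_eq ν νL hlift a b hab hb, interval_eq ν νL hlift (gL a) (gL b) h1 h2]
  conv_lhs => rw [← hinv]
  rw [Measure.map_apply (g_meas g gL hcont hcomm) (img_meas (gL a) (gL b)),
    g_preimage g gL hmono hper hcomm a b]

private lemma inv_any (hmono : StrictMono gL) (hcont : Continuous gL)
    (hper : ∀ y : ℝ, gL (y + 1) = gL y + 1)
    (hcomm : ∀ y : ℝ, ((gL y : ℝ) : UnitAddCircle) = g (y : UnitAddCircle))
    (hinv : Measure.map g ν = ν) (hlift : IsLift ν νL)
    (a b : ℝ) (hab : a ≤ b) :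
    νL (Ico (gL a) (gL b)) = νL (Ico a b) := by
  obtain ⟨n, hn⟩ := exists_nat_ge (b - a)
  induction n generalizing a with
  | zero =>
    have : b = a := by
      have h0 : b - a ≤ 0 := by exact_mod_cast hn
      linarith
    rw [this]
    simp
  | succ n ih =>
    rcases le_or_gt b (a + 1) with h | h
    · exact inv_small g gL ν νL hmono hcont hper hcomm hinv hlift a b hab h
    · have key1 : νL (Ico a b) = νL (Ico a (a+1)) + νL (Ico (a+1) b) :=
        split_mass νL a (a+1) b (by linarith) h.le
      have hg1 : gL (a + 1) = gL a + 1 := hper a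
      have key2 : νL (Ico (gL a) (gL b)) = νL (Ico (gL a) (gL (a+1))) + νL (Ico (gL (a+1)) (gL b)) := by
        refine split_mass νL _ _ _ (hmono.monotone (by linarith)) (hmono.monotone h.le)
      rw [key1, key2,
        inv_small g gL ν νL hmono hcont hper hcomm hinv hlift a (a+1) (by linarith) le_rfl,
        ih (a+1) (by linarith) (by have h2 := hn; push_cast at h2; linarith)]

end Main

theorem stmt18 (g : UnitAddCircle → UnitAddCircle) (gL : ℝ → ℝ)
    (hmono : StrictMono gL) (hcont : Continuous gL)
    (hper : ∀ y : ℝ, gL (y + 1) = gL y + 1)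
    (hcomm : ∀ y : ℝ, ((gL y : ℝ) : UnitAddCircle) = g (y : UnitAddCircle))
    (hpos : ∀ x : ℝ, x < gL x)
    (ρ : ℝ) (hρ : Tendsto (fun n => gL^[n] 0 / n) atTop (𝓝 ρ))
    (ν : Measure UnitAddCircle) [IsProbabilityMeasure ν]
    (hinv : Measure.map g ν = ν)
    (νL : Measure ℝ) (hlift : IsLift ν νL) :
    ∀ x : ℝ, (νL (Ico x (gL x))).toReal = ρ := by
  intro x
  set c : ENNReal := νL (Ico x (gL x)) with hc
  set C : ℝ := c.toReal with hC
  have hcfin : c ≠ ⊤ := fin_mass ν νL hlift x (gL x)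
  -- iterates are monotone in n
  have hle : ∀ n : ℕ, ∀ y : ℝ, gL^[n] y ≤ gL^[n+1] y := by
    intro n y
    rw [Function.iterate_succ_apply']
    exact (hpos _).le
  have hxle : ∀ n : ℕ, x ≤ gL^[n] x := by
    intro n
    induction n with
    | zero => simp
    | succ n ih => exact le_trans ih (hle n x)
  -- one-step invariance along the orbit
  have step : ∀ k : ℕ, νL (Ico (gL^[k] x) (gL^[k+1] x)) = c := by
    intro k
    induction k with
    | zero => simp [hc]
    | succ k ih =>
      rw [Function.iterate_succ_apply' gL (k+1), Function.iterate_succ_apply' gL k]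
      rw [inv_any g gL ν νL hmono hcont hper hcomm hinv hlift _ _ (hpos _).le]
      rw [Function.iterate_succ_apply' gL k] at ih
      exact ih
  -- total mass of orbit interval
  have total : ∀ n : ℕ, νL (Ico x (gL^[n] x)) = n * c := by
    intro n
    induction n with
    | zero => simp
    | succ n ih =>
      rw [split_mass νL x (gL^[n] x) (gL^[n+1] x) (hxle n) (hle n x), ih, step n]
      push_cast
      ring
  -- sandwich: |n*C - (gL^[n] x - x)| ≤ 1
  have sandwich : ∀ n : ℕ, |(n : ℝ) * C - (gL^[n] x - x)| ≤ 1 := by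
    intro n
    set y : ℝ := gL^[n] x with hy
    have hxy : x ≤ y := hxle n
    set k : ℕ := ⌊y - x⌋₊ with hk
    have hk1 : (k : ℝ) ≤ y - x := Nat.floor_le (by linarith)
    have hk2 : y - x < (k : ℝ) + 1 := Nat.lt_floor_add_one _
    have hlow : (k : ENNReal) ≤ (n : ENNReal) * c := by
      rw [← total n, ← nat_mass ν νL hlift x k]
      exact measure_mono (Set.Ico_subset_Ico_right (by linarith))
    have hhigh : (n : ENNReal) * c ≤ ((k : ℕ) : ENNReal) + 1 := by
      rw [← total n]
      calc νL (Ico x y) ≤ νL (Ico x (x + ((k+1 : ℕ) : ℝ))) := by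
            refine measure_mono (Set.Ico_subset_Ico_right ?_)
            push_cast
            linarith
        _ = ((k + 1 : ℕ) : ENNReal) := nat_mass ν νL hlift x (k+1)
        _ = ((k : ℕ) : ENNReal) + 1 := by push_cast; ring
    have hmulfin : (n : ENNReal) * c ≠ ⊤ := by
      rw [← total n]; exact fin_mass ν νL hlift _ _
    have htoR : ((n : ENNReal) * c).toReal = (n : ℝ) * C := by
      rw [ENNReal.toReal_mul]; simp [hC]
    have hlowR : (k : ℝ) ≤ (n : ℝ) * C := by
      have := ENNReal.toReal_mono hmulfin hlow
      rwa [htoR, ENNReal.toReal_natCast] at this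
    have hhighR : (n : ℝ) * C ≤ (k : ℝ) + 1 := by
      have := ENNReal.toReal_mono (by simp : (((k:ℕ) : ENNReal) + 1) ≠ ⊤) hhigh
      rw [htoR] at this
      rwa [ENNReal.toReal_add (by simp) (by simp), ENNReal.toReal_natCast, ENNReal.toReal_one] at this
    rw [abs_le]
    constructor <;> linarith
  -- compare gL^[n] x with gL^[n] 0
  have hiterZ : ∀ (n : ℕ) (t : ℝ) (m : ℤ), gL^[n] (t + m) = gL^[n] t + m := by
    intro n
    induction n with
    | zero => intro t m; simp
    | succ n ih =>
      intro t m
      rw [Function.iterate_succ_apply' gL n, Function.iterate_succ_apply' gL n, ih t m,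
        gL_int gL hper]
  have hcomp : ∀ n : ℕ, |(gL^[n] x - x) - gL^[n] 0| ≤ 1 := by
    intro n
    set m : ℤ := ⌊x⌋ with hm
    have hm1 : (m : ℝ) ≤ x := Int.floor_le x
    have hm2 : x < (m : ℝ) + 1 := Int.lt_floor_add_one x
    have h1 : gL^[n] 0 + (m : ℝ) ≤ gL^[n] x := by
      have := (hmono.iterate n).monotone (show (0 : ℝ) + (m:ℝ) ≤ x by linarith)
      rwa [hiterZ n 0 m] at this
    have h2 : gL^[n] x ≤ gL^[n] 0 + ((m : ℝ) + 1) := by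
      have := (hmono.iterate n).monotone (show x ≤ (0 : ℝ) + ((m:ℤ) + 1 : ℤ) by push_cast; linarith)
      rw [hiterZ n 0 (m+1)] at this
      push_cast at this
      linarith
    rw [abs_le]
    constructor <;> linarith
  -- conclude via limits
  have hCdiff : ∀ n : ℕ, 1 ≤ n → |gL^[n] 0 / n - C| ≤ 2 / n := by
    intro n hn
    have hn0 : (0 : ℝ) < n := by exact_mod_cast hn
    have h1 := sandwich n
    have h2 := hcomp n
    have : |gL^[n] 0 - (n : ℝ) * C| ≤ 2 := by
      have := abs_sub (gL^[n] 0) ((n:ℝ) * C)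
      calc |gL^[n] 0 - (n : ℝ) * C|
          = |((gL^[n] 0) - (gL^[n] x - x)) + ((gL^[n] x - x) - (n:ℝ) * C)| := by ring_nf
        _ ≤ |(gL^[n] 0) - (gL^[n] x - x)| + |(gL^[n] x - x) - (n:ℝ) * C| := abs_add_le _ _
        _ ≤ 1 + 1 := by
            rw [abs_sub_comm ((gL^[n] 0)) _, abs_sub_comm _ ((n:ℝ) * C)]
            exact add_le_add h2 h1
        _ = 2 := by norm_num
    calc |gL^[n] 0 / n - C| = |gL^[n] 0 - (n : ℝ) * C| / n := by
          rw [← abs_of_pos hn0, ← abs_div]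
          congr 1
          field_simp
          rw [abs_of_pos hn0]; ring
      _ ≤ 2 / n := by gcongr
  -- gL^[n] 0 / n tends to C
  have htendC : Tendsto (fun n : ℕ => gL^[n] 0 / n) atTop (𝓝 C) := by
    have h0 : Tendsto (fun n : ℕ => gL^[n] 0 / n - C) atTop (𝓝 0) := by
      refine squeeze_zero_norm' ?_ (tendsto_const_div_atTop_nhds_zero_nat 2)
      filter_upwards [eventually_ge_atTop 1] with n hn
      exact hCdiff n hn
    have h1 : Tendsto (fun _ : ℕ => C) atTop (𝓝 C) := tendsto_const_nhds
    have := h0.add h1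
    simpa using this
  exact (tendsto_nhds_unique htendC hρ).symm ▸ rfl
end
end
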